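/- Let d ≥ 1 and let U be a nonempty connected open subset of ℂ^d. Suppose (f_j)_{j∈ℕ} is a sequence of holomorphic functions U → ℂ such that for every z ∈ U the family (|f_j(z)|²)_{j∈ℕ} is summable, and such that the ℂ-linear span of {f_j : j ∈ ℕ} in the space of functions U → ℂ is infinite-dimensional. Then there do not exist n ≥ 1, a positive integer α, and holomorphic functions h₁, …, h_n : U → ℂ with (1 + Σ_{i=1}^n |h_i(z)|²)^α = 1 + ∑'_{j∈ℕ} |f_j(z)|² for all z ∈ U. -/

import Mathlib

open Complex Filter Metric

noncomputable section

local notation "conj'" => starRingEnd ℂ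

lemma hasDerivAt_conj_comp {V : ℂ → ℂ} {a z : ℂ} (h : HasDerivAt V a (conj' z)) :
    HasDerivAt (fun w => conj' (V (conj' w))) (conj' a) z := by
  rw [hasDerivAt_iff_tendsto_slope] at h ⊢
  have hconj : Tendsto conj' (nhdsWithin z {z}ᶜ) (nhdsWithin (conj' z) {conj' z}ᶜ) := by
    rw [tendsto_nhdsWithin_iff]
    constructor
    · exact (Complex.continuous_conj.tendsto z).mono_left nhdsWithin_le_nhds
    · filter_upwards [eventually_mem_nhdsWithin] with w hw
      simp only [Set.mem_compl_iff, Set.mem_singleton_iff] at hw ⊢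
      intro hc
      exact hw (by simpa using congrArg conj' hc)
  have hcont : Tendsto conj' (nhds a) (nhds (conj' a)) := Complex.continuous_conj.tendsto a
  have := hcont.comp (h.comp hconj)
  refine this.congr ?_
  intro w
  simp only [Function.comp_apply, slope_def_field, map_div₀, map_sub, Complex.conj_conj]

lemma diff_conj_comp {V : ℂ → ℂ} {z : ℂ} (h : DifferentiableAt ℂ V (conj' z)) :
    DifferentiableAt ℂ (fun w => conj' (V (conj' w))) z :=
  (hasDerivAt_conj_comp h.hasDerivAt).differentiableAt

/-- Dini-type lemma. -/
lemma dini_unif {X : Type*} [TopologicalSpace X] {C : Set X} (hC : IsCompact C)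
    {u : ℕ → X → ℝ} (hcont : ∀ M, ContinuousOn (u M) C)
    (hanti : ∀ x ∈ C, ∀ M, u (M + 1) x ≤ u M x)
    (hlim : ∀ x ∈ C, Tendsto (fun M => u M x) atTop (nhds 0))
    {ε : ℝ} (hε : 0 < ε) : ∃ M0, ∀ M ≥ M0, ∀ x ∈ C, u M x < ε := by
  have hmono : ∀ x ∈ C, Antitone fun M => u M x := fun x hx =>
    antitone_nat_of_succ_le fun M => hanti x hx M
  have main : ∃ M0, ∀ M ≥ M0, ∀ x ∈ C ∩ C, u M x < ε := by
    refine hC.induction_on (p := fun S => ∃ M0, ∀ M ≥ M0, ∀ x ∈ S ∩ C, u M x < ε)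
      ⟨0, by simp⟩ ?_ ?_ ?_
    · rintro s t hst ⟨M0, hM0⟩
      exact ⟨M0, fun M hM x hx => hM0 M hM x ⟨hst hx.1, hx.2⟩⟩
    · rintro s t ⟨M0, hM0⟩ ⟨M1, hM1⟩
      refine ⟨max M0 M1, fun M hM x hx => ?_⟩
      rcases hx.1 with h | h
      · exact hM0 M (le_trans (le_max_left _ _) hM) x ⟨h, hx.2⟩
      · exact hM1 M (le_trans (le_max_right _ _) hM) x ⟨h, hx.2⟩
    · intro x hx
      obtain ⟨M1, hM1⟩ := Metric.tendsto_atTop.1 (hlim x hx) ε hε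
      have hM1' : u M1 x < ε := by
        have := hM1 M1 le_rfl
        rw [Real.dist_eq, sub_zero] at this
        exact lt_of_le_of_lt (le_abs_self _) this
      have hmem : (u M1) ⁻¹' (Set.Iio ε) ∈ nhdsWithin x C :=
        (hcont M1 x hx).preimage_mem_nhdsWithin (Iio_mem_nhds hM1')
      exact ⟨_, hmem, M1, fun M hM y hy => lt_of_le_of_lt (hmono y hy.2 hM) hy.1⟩
  obtain ⟨M0, hM0⟩ := main
  exact ⟨M0, fun M hM x hx => hM0 M hM x ⟨hx, hx⟩⟩

/-- One-variable: holomorphic on a disc with *real* centre, vanishing at real points,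
vanishes identically. -/
lemma vanish_on_disc {χ : ℂ → ℂ} {c r : ℝ} (hr : 0 < r)
    (hχ : DifferentiableOn ℂ χ (Metric.ball (c : ℂ) r))
    (hreal : ∀ x : ℝ, (x : ℂ) ∈ Metric.ball (c : ℂ) r → χ x = 0) :
    ∀ z ∈ Metric.ball (c : ℂ) r, χ z = 0 := by
  have han : AnalyticOnNhd ℂ χ (Metric.ball (c : ℂ) r) :=
    hχ.analyticOnNhd Metric.isOpen_ball
  have hconn : IsPreconnected (Metric.ball (c : ℂ) r) := (convex_ball _ _).isPreconnected
  have hcmem : (c : ℂ) ∈ Metric.ball (c : ℂ) r := Metric.mem_ball_self hr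
  have hfreq : ∃ᶠ z in nhdsWithin (c : ℂ) {(c : ℂ)}ᶜ, χ z = 0 := by
    rw [Filter.frequently_iff]
    intro V hV
    rw [Metric.mem_nhdsWithin_iff] at hV
    obtain ⟨δ, hδ, hsub⟩ := hV
    refine ⟨((c + min δ r / 2 : ℝ) : ℂ), hsub ⟨?_, ?_⟩, hreal _ ?_⟩
    · rw [Metric.mem_ball]
      have : dist ((c + min δ r / 2 : ℝ) : ℂ) (c : ℂ) = |min δ r / 2| := by
        rw [Complex.isometry_ofReal.dist_eq, Real.dist_eq, add_sub_cancel_left]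
      rw [this, abs_of_pos (by positivity)]
      have := min_le_left δ r
      linarith [lt_min hδ hr]
    · simp only [Set.mem_compl_iff, Set.mem_singleton_iff]
      intro hc
      have := congrArg Complex.re hc
      simp at this
      have : min δ r / 2 > 0 := by positivity
      linarith [this]
    · rw [Metric.mem_ball]
      have : dist ((c + min δ r / 2 : ℝ) : ℂ) (c : ℂ) = |min δ r / 2| := by
        rw [Complex.isometry_ofReal.dist_eq, Real.dist_eq, add_sub_cancel_left]
      rw [this, abs_of_pos (by positivity)]
      have := min_le_right δ r
      linarith
  exact fun z hz => han.eqOn_zero_of_preconnected_of_frequently_eq_zero hconn hcmem hfreq hz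

end

section Polydisc

/-- Propagation of vanishing from real points of a polydisc (with real centre) for functions
all of whose one-variable coordinate slices are holomorphic. -/
lemma vanish_of_slices {ι : Type*} [Fintype ι] [DecidableEq ι] {c : ι → ℝ} {r : ℝ}
    (hr : 0 < r) {Θ : (ι → ℂ) → ℂ}
    (hslice : ∀ x : ι → ℂ, (∀ s, x s ∈ Metric.ball ((c s : ℝ) : ℂ) r) → ∀ t,
      DifferentiableOn ℂ (fun lam => Θ (Function.update x t lam))
        (Metric.ball ((c t : ℝ) : ℂ) r))
    (hreal : ∀ x : ι → ℂ, (∀ s, x s ∈ Metric.ball ((c s : ℝ) : ℂ) r) →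
      (∀ s, (x s).im = 0) → Θ x = 0) :
    ∀ x : ι → ℂ, (∀ s, x s ∈ Metric.ball ((c s : ℝ) : ℂ) r) → Θ x = 0 := by
  suffices H : ∀ (s : Finset ι), ∀ x : ι → ℂ, (∀ t, x t ∈ Metric.ball ((c t : ℝ) : ℂ) r) →
      (∀ t, t ∉ s → (x t).im = 0) → Θ x = 0 by
    intro x hx
    exact H Finset.univ x hx (fun t ht => absurd (Finset.mem_univ t) ht)
  intro s
  induction s using Finset.induction with
  | empty =>
    intro x hx h
    exact hreal x hx (fun t => h t (Finset.notMem_empty t))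
  | @insert a s ha ih =>
    intro x hx hout
    have hd : DifferentiableOn ℂ (fun lam => Θ (Function.update x a lam))
        (Metric.ball ((c a : ℝ) : ℂ) r) := hslice x hx a
    have hvan : ∀ z ∈ Metric.ball ((c a : ℝ) : ℂ) r, Θ (Function.update x a z) = 0 := by
      refine vanish_on_disc hr hd ?_
      intro ρ hρ
      refine ih (Function.update x a ρ) ?_ ?_
      · intro t
        rcases eq_or_ne t a with rfl | hta
        · simpa using hρ
        · simpa [Function.update_apply, hta] using hx t
      · intro t hts
        rcases eq_or_ne t a with rfl | hta
        · simp [Function.update_apply]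
        · have : t ∉ insert a s := by
            simp only [Finset.mem_insert, not_or]
            exact ⟨hta, hts⟩
          simpa [Function.update_apply, hta] using hout t this
    have := hvan (x a) (hx a)
    simpa [Function.update_eq_self] using this

end Polydisc

section Tail

local notation "conj'" => starRingEnd ℂ

lemma summable_mul_conj {a b : ℕ → ℂ} (ha : Summable fun j => ‖a j‖ ^ 2)
    (hb : Summable fun j => ‖b j‖ ^ 2) : Summable fun j => a j * conj' (b j) := by
  refine Summable.of_norm (Summable.of_nonneg_of_le (fun j => norm_nonneg _) (fun j => ?_)
    (((ha.add hb).div_const 2)))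
  rw [norm_mul, RCLike.norm_conj]
  have h2 : 2 * ‖a j‖ * ‖b j‖ ≤ ‖a j‖ ^ 2 + ‖b j‖ ^ 2 := two_mul_le_add_sq _ _
  have h0a := norm_nonneg (a j)
  have h0b := norm_nonneg (b j)
  linarith

set_option maxHeartbeats 1000000 in
lemma tail_bound {a b : ℕ → ℂ} (ha : Summable fun j => ‖a j‖ ^ 2)
    (hb : Summable fun j => ‖b j‖ ^ 2) (M : ℕ) :
    ‖(∑' j, a j * conj' (b j)) - ∑ j ∈ Finset.range M, a j * conj' (b j)‖ ≤
      ((∑' j, ‖a j‖ ^ 2) - ∑ j ∈ Finset.range M, ‖a j‖ ^ 2 +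
        ((∑' j, ‖b j‖ ^ 2) - ∑ j ∈ Finset.range M, ‖b j‖ ^ 2)) / 2 := by
  have hsT : Summable fun j => a j * conj' (b j) := summable_mul_conj ha hb
  have htail : (∑' j, a j * conj' (b j)) - (∑ j ∈ Finset.range M, a j * conj' (b j)) =
      ∑' j, a (j + M) * conj' (b (j + M)) := by
    have h1 := Summable.sum_add_tsum_nat_add M hsT
    rw [← h1]; ring
  have hsa : (∑' j, ‖a j‖ ^ 2) - (∑ j ∈ Finset.range M, ‖a j‖ ^ 2) =
      ∑' j, ‖a (j + M)‖ ^ 2 := by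
    have h1 := Summable.sum_add_tsum_nat_add M ha; linarith
  have hsb : (∑' j, ‖b j‖ ^ 2) - (∑ j ∈ Finset.range M, ‖b j‖ ^ 2) =
      ∑' j, ‖b (j + M)‖ ^ 2 := by
    have h1 := Summable.sum_add_tsum_nat_add M hb; linarith
  rw [htail, hsa, hsb]
  have hsa' : Summable fun j => ‖a (j + M)‖ ^ 2 := (summable_nat_add_iff M).2 ha
  have hsb' : Summable fun j => ‖b (j + M)‖ ^ 2 := (summable_nat_add_iff M).2 hb
  have hsT' : Summable fun j => ‖a (j + M) * conj' (b (j + M))‖ :=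
    ((summable_nat_add_iff M).2 hsT).norm
  calc ‖∑' j, a (j + M) * conj' (b (j + M))‖
      ≤ ∑' j, ‖a (j + M) * conj' (b (j + M))‖ := norm_tsum_le_tsum_norm hsT'
    _ ≤ ∑' j, (‖a (j + M)‖ ^ 2 + ‖b (j + M)‖ ^ 2) / 2 := by
        refine Summable.tsum_le_tsum (fun j => ?_) hsT' ((hsa'.add hsb').div_const 2)
        rw [norm_mul, RCLike.norm_conj]
        have h2 : 2 * ‖a (j + M)‖ * ‖b (j + M)‖ ≤ ‖a (j + M)‖ ^ 2 + ‖b (j + M)‖ ^ 2 :=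
          two_mul_le_add_sq _ _
        linarith
    _ = ((∑' j, ‖a (j + M)‖ ^ 2) + ∑' j, ‖b (j + M)‖ ^ 2) / 2 := by
        rw [← Summable.tsum_add hsa' hsb', tsum_div_const]

end Tail

section Slice

local notation "conj'" => starRingEnd ℂ

lemma conj_mem_ball {c r : ℝ} {lam : ℂ} (h : lam ∈ Metric.ball ((c : ℝ) : ℂ) r) :
    conj' lam ∈ Metric.ball ((c : ℝ) : ℂ) r := by
  rw [Metric.mem_ball] at h ⊢
  rw [Complex.dist_eq] at h ⊢
  have heq : conj' lam - ((c : ℝ) : ℂ) = conj' (lam - ((c : ℝ) : ℂ)) := by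
    rw [map_sub, Complex.conj_ofReal]
  rw [heq, Complex.norm_conj]
  exact h

set_option maxHeartbeats 1000000 in
lemma kernel_slice_diff {d : ℕ} {U : Set (Fin d → ℂ)} (hUo : IsOpen U)
    {F : ℕ → (Fin d → ℂ) → ℂ} (hF : ∀ j, AnalyticOnNhd ℂ (F j) U)
    {K : Type*} [Fintype K] {g : K → (Fin d → ℂ) → ℂ} (hg : ∀ k, AnalyticOnNhd ℂ (g k) U)
    {Qt : (Fin d → ℂ) → ℝ}
    (hQt : ∀ z ∈ U, HasSum (fun j => ‖F j z‖ ^ 2) (Qt z)) (hQc : ContinuousOn Qt U)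
    {C0 : Set (Fin d → ℂ)} (hC0 : IsCompact C0) (hC0U : C0 ⊆ U)
    {C1 C2 : ℂ → (Fin d → ℂ)} (hC1 : Differentiable ℂ C1) (hC2 : Differentiable ℂ C2)
    {c r : ℝ}
    (hmem1 : ∀ lam ∈ Metric.ball ((c : ℝ) : ℂ) r, C1 lam ∈ C0)
    (hmem2 : ∀ mu ∈ Metric.ball ((c : ℝ) : ℂ) r, C2 mu ∈ C0) :
    DifferentiableOn ℂ (fun lam => (∑ k, g k (C1 lam) * conj' (g k (C2 (conj' lam)))) -
      ∑' j, F j (C1 lam) * conj' (F j (C2 (conj' lam)))) (Metric.ball ((c : ℝ) : ℂ) r) := by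
  set B : Set ℂ := Metric.ball ((c : ℝ) : ℂ) r with hB
  -- differentiability of individual terms
  have hterm : ∀ (φ : (Fin d → ℂ) → ℂ), AnalyticOnNhd ℂ φ U → ∀ lam ∈ B,
      DifferentiableAt ℂ (fun x => φ (C1 x) * conj' (φ (C2 (conj' x)))) lam := by
    intro φ hφ lam hlam
    have h1 : DifferentiableAt ℂ (fun x => φ (C1 x)) lam :=
      ((hφ _ (hC0U (hmem1 lam hlam))).differentiableAt).comp lam (hC1 lam)
    have h2 : DifferentiableAt ℂ (fun x => conj' (φ (C2 (conj' x)))) lam := by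
      refine diff_conj_comp (V := fun mu => φ (C2 mu)) ?_
      exact ((hφ _ (hC0U (hmem2 _ (conj_mem_ball hlam)))).differentiableAt).comp _ (hC2 _)
    exact h1.mul h2
  -- partial sums
  set P : ℕ → ℂ → ℂ := fun M lam => (∑ k, g k (C1 lam) * conj' (g k (C2 (conj' lam)))) -
      ∑ j ∈ Finset.range M, F j (C1 lam) * conj' (F j (C2 (conj' lam))) with hP
  have hPdiff : ∀ M, DifferentiableOn ℂ (P M) B := by
    intro M lam hlam
    refine DifferentiableAt.differentiableWithinAt ?_
    refine DifferentiableAt.sub ?_ ?_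
    · exact DifferentiableAt.fun_sum fun k _ => hterm (g k) (hg k) lam hlam
    · exact DifferentiableAt.fun_sum fun j _ => hterm (F j) (hF j) lam hlam
  -- uniform convergence
  have hunif : TendstoUniformlyOn P
      (fun lam => (∑ k, g k (C1 lam) * conj' (g k (C2 (conj' lam)))) -
        ∑' j, F j (C1 lam) * conj' (F j (C2 (conj' lam)))) Filter.atTop B := by
    rw [Metric.tendstoUniformlyOn_iff]
    intro ε hε
    -- Dini on C0
    set u : ℕ → (Fin d → ℂ) → ℝ := fun M x => Qt x - ∑ j ∈ Finset.range M, ‖F j x‖ ^ 2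
      with hu
    have hucont : ∀ M, ContinuousOn (u M) C0 := by
      intro M
      refine ContinuousOn.sub (hQc.mono hC0U) ?_
      refine continuousOn_finset_sum _ fun j _ => ?_
      exact (((hF j).continuousOn.mono hC0U).norm).pow 2
    have huanti : ∀ x ∈ C0, ∀ M, u (M + 1) x ≤ u M x := by
      intro x _ M
      simp only [hu, Finset.sum_range_succ]
      have := sq_nonneg ‖F M x‖
      simp only [sub_le_sub_iff_left]
      have h0 := norm_nonneg (F M x)
      nlinarith
    have hulim : ∀ x ∈ C0, Filter.Tendsto (fun M => u M x) Filter.atTop (nhds 0) := by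
      intro x hx
      have := (hQt x (hC0U hx)).tendsto_sum_nat
      have h2 := Filter.Tendsto.sub (tendsto_const_nhds (x := Qt x)) this
      simpa using h2
    obtain ⟨M0, hM0⟩ := dini_unif hC0 hucont huanti hulim hε
    refine Filter.eventually_atTop.2 ⟨M0, fun M hM lam hlam => ?_⟩
    have hz : C1 lam ∈ C0 := hmem1 lam hlam
    have hw : C2 (conj' lam) ∈ C0 := hmem2 _ (conj_mem_ball hlam)
    have hsz := (hQt _ (hC0U hz)).summable
    have hsw := (hQt _ (hC0U hw)).summable
    have hb := tail_bound (a := fun j => F j (C1 lam)) (b := fun j => F j (C2 (conj' lam)))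
      hsz hsw M
    rw [dist_eq_norm]
    have heq : (fun lam => (∑ k, g k (C1 lam) * conj' (g k (C2 (conj' lam)))) -
        ∑' j, F j (C1 lam) * conj' (F j (C2 (conj' lam)))) lam - P M lam =
        -((∑' j, F j (C1 lam) * conj' (F j (C2 (conj' lam)))) -
          ∑ j ∈ Finset.range M, F j (C1 lam) * conj' (F j (C2 (conj' lam)))) := by
      simp only [hP]; ring
    rw [heq, norm_neg]
    have htz : Qt (C1 lam) - ∑ j ∈ Finset.range M, ‖F j (C1 lam)‖ ^ 2 < ε :=
      hM0 M hM _ hz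
    have htw : Qt (C2 (conj' lam)) - ∑ j ∈ Finset.range M, ‖F j (C2 (conj' lam))‖ ^ 2 < ε :=
      hM0 M hM _ hw
    have htz' : (∑' j, ‖F j (C1 lam)‖ ^ 2) = Qt (C1 lam) := (hQt _ (hC0U hz)).tsum_eq
    have htw' : (∑' j, ‖F j (C2 (conj' lam))‖ ^ 2) = Qt (C2 (conj' lam)) :=
      (hQt _ (hC0U hw)).tsum_eq
    rw [htz', htw'] at hb
    linarith
  exact hunif.tendstoLocallyUniformlyOn.differentiableOn
    (Filter.Eventually.of_forall hPdiff) Metric.isOpen_ball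

end Slice

section Gram

open scoped InnerProductSpace ComplexConjugate

lemma norm_eq_of_gram {E F : Type*} [NormedAddCommGroup E] [InnerProductSpace ℂ E]
    [NormedAddCommGroup F] [InnerProductSpace ℂ F] {ι : Type*} [Fintype ι]
    (v : ι → E) (v' : ι → F)
    (hgram : ∀ i j, ⟪v i, v j⟫_ℂ = ⟪v' i, v' j⟫_ℂ) (a : ι → ℂ) :
    ‖∑ i, a i • v i‖ = ‖∑ i, a i • v' i‖ := by
  have hinner : ⟪∑ i, a i • v i, ∑ i, a i • v i⟫_ℂ = ⟪∑ i, a i • v' i, ∑ i, a i • v' i⟫_ℂ := by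
    rw [sum_inner, sum_inner]
    refine Finset.sum_congr rfl fun i _ => ?_
    rw [inner_sum, inner_sum]
    refine Finset.sum_congr rfl fun j _ => ?_
    rw [inner_smul_left, inner_smul_left, inner_smul_right, inner_smul_right, hgram]
  rw [@norm_eq_sqrt_re_inner ℂ, @norm_eq_sqrt_re_inner ℂ, hinner]

end Gram

section ZW

local notation "conj'" => starRingEnd ℂ

variable {d : ℕ}

/-- real-coordinates map: `z = p + i q`. -/
def Zmap (x : (Fin d ⊕ Fin d) → ℂ) : Fin d → ℂ := fun s => x (Sum.inl s) + I * x (Sum.inr s)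

/-- the conjugate-side map: `w = conj (p - i q)`. -/
def Wmap (x : (Fin d ⊕ Fin d) → ℂ) : Fin d → ℂ :=
  fun s => conj' (x (Sum.inl s) - I * x (Sum.inr s))

/-- coordinates of the centre. -/
def ccoord (z0 : Fin d → ℂ) : (Fin d ⊕ Fin d) → ℝ :=
  Sum.elim (fun s => (z0 s).re) (fun s => (z0 s).im)

lemma Zmap_mem {z0 : Fin d → ℂ} {r' : ℝ} {x : (Fin d ⊕ Fin d) → ℂ}
    (hx : ∀ u, dist (x u) ((ccoord z0 u : ℝ) : ℂ) < r') (s : Fin d) :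
    dist (Zmap x s) (z0 s) < 2 * r' := by
  have h1 := hx (Sum.inl s)
  have h2 := hx (Sum.inr s)
  simp only [ccoord, Sum.elim_inl, Sum.elim_inr] at h1 h2
  rw [dist_eq_norm] at h1 h2 ⊢
  have hrepr : Zmap x s - z0 s =
      (x (Sum.inl s) - ((z0 s).re : ℂ)) + I * (x (Sum.inr s) - ((z0 s).im : ℂ)) := by
    have hz : ((z0 s).re : ℂ) + ((z0 s).im : ℂ) * I = z0 s := Complex.re_add_im (z0 s)
    simp only [Zmap]
    linear_combination hz
  rw [hrepr]
  calc ‖_ + I * (x (Sum.inr s) - ((z0 s).im : ℂ))‖ ≤ ‖x (Sum.inl s) - ((z0 s).re : ℂ)‖ +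
      ‖I * (x (Sum.inr s) - ((z0 s).im : ℂ))‖ := norm_add_le _ _
    _ = ‖x (Sum.inl s) - ((z0 s).re : ℂ)‖ + ‖x (Sum.inr s) - ((z0 s).im : ℂ)‖ := by
        rw [norm_mul, Complex.norm_I, one_mul]
    _ < 2 * r' := by linarith

lemma Wmap_mem {z0 : Fin d → ℂ} {r' : ℝ} {x : (Fin d ⊕ Fin d) → ℂ}
    (hx : ∀ u, dist (x u) ((ccoord z0 u : ℝ) : ℂ) < r') (s : Fin d) :
    dist (Wmap x s) (z0 s) < 2 * r' := by
  have h1 := hx (Sum.inl s)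
  have h2 := hx (Sum.inr s)
  simp only [ccoord, Sum.elim_inl, Sum.elim_inr] at h1 h2
  rw [dist_eq_norm] at h1 h2 ⊢
  have key : ‖Wmap x s - z0 s‖ =
      ‖(x (Sum.inl s) - ((z0 s).re : ℂ)) - I * (x (Sum.inr s) - ((z0 s).im : ℂ))‖ := by
    have hcz : conj' (z0 s) = ((z0 s).re : ℂ) - I * ((z0 s).im : ℂ) := by
      conv_lhs => rw [← Complex.re_add_im (z0 s)]
      rw [map_add, map_mul, Complex.conj_I, Complex.conj_ofReal, Complex.conj_ofReal]
      ring
    rw [← RCLike.norm_conj (K := ℂ) (Wmap x s - z0 s)]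
    congr 1
    rw [map_sub, hcz]
    simp only [Wmap, Complex.conj_conj]
    ring
  rw [key]
  calc ‖_ - I * (x (Sum.inr s) - ((z0 s).im : ℂ))‖ ≤ ‖x (Sum.inl s) - ((z0 s).re : ℂ)‖ +
      ‖I * (x (Sum.inr s) - ((z0 s).im : ℂ))‖ := norm_sub_le _ _
    _ = ‖x (Sum.inl s) - ((z0 s).re : ℂ)‖ + ‖x (Sum.inr s) - ((z0 s).im : ℂ)‖ := by
        rw [norm_mul, Complex.norm_I, one_mul]
    _ < 2 * r' := by linarith

lemma Zmap_update_diff (x : (Fin d ⊕ Fin d) → ℂ) (t : Fin d ⊕ Fin d) :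
    Differentiable ℂ (fun lam => Zmap (d := d) (Function.update x t lam)) := by
  rw [differentiable_pi]
  intro s
  simp only [Zmap, Function.update_apply]
  by_cases h1 : (Sum.inl s : Fin d ⊕ Fin d) = t
  · by_cases h2 : (Sum.inr s : Fin d ⊕ Fin d) = t
    · rw [← h2] at h1; exact absurd h1 (by simp)
    · simp only [if_pos h1, if_neg h2]
      fun_prop
  · by_cases h2 : (Sum.inr s : Fin d ⊕ Fin d) = t
    · simp only [if_neg h1, if_pos h2]
      fun_prop
    · simp only [if_neg h1, if_neg h2]
      fun_prop

lemma Wmap_update_diff (x : (Fin d ⊕ Fin d) → ℂ) (t : Fin d ⊕ Fin d) :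
    Differentiable ℂ (fun mu => Wmap (d := d) (Function.update x t (conj' mu))) := by
  rw [differentiable_pi]
  intro s
  simp only [Wmap, Function.update_apply]
  by_cases h1 : (Sum.inl s : Fin d ⊕ Fin d) = t
  · by_cases h2 : (Sum.inr s : Fin d ⊕ Fin d) = t
    · rw [← h2] at h1; exact absurd h1 (by simp)
    · simp only [if_pos h1, if_neg h2, map_sub, map_mul, Complex.conj_conj, Complex.conj_I]
      fun_prop
  · by_cases h2 : (Sum.inr s : Fin d ⊕ Fin d) = t
    · simp only [if_neg h1, if_pos h2, map_sub, map_mul, Complex.conj_conj, Complex.conj_I]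
      fun_prop
    · simp only [if_neg h1, if_neg h2]
      fun_prop

end ZW

section Main

open scoped InnerProductSpace

local notation "conj'" => starRingEnd ℂ

set_option maxHeartbeats 2000000 in
/-- If `(f_j)` is a sequence of holomorphic functions on a nonempty
connected open `U ⊆ ℂ^d` with pointwise summable squared norms and infinite-dimensional
span, then `1 + ∑'_j |f_j|²` can never equal `(1 + Σ_{i=1}^n |h_i|²)^α` for holomorphic
`h_i` and a positive integer `α`. -/
theorem stmt_11 (d : ℕ) (hd : 1 ≤ d)
    (U : Set (Fin d → ℂ)) (hUo : IsOpen U) (hUc : IsConnected U)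
    (f : ℕ → (Fin d → ℂ) → ℂ) (hf : ∀ j, AnalyticOn ℂ (f j) U)
    (hsum : ∀ z ∈ U, Summable fun j => ‖f j z‖ ^ 2)
    (hinf : ¬ FiniteDimensional ℂ
      ↥(Submodule.span ℂ (Set.range fun j => U.restrict (f j)))) :
    ¬ ∃ (n : ℕ) (_ : 1 ≤ n) (α : ℕ) (_ : 0 < α) (h : Fin n → (Fin d → ℂ) → ℂ),
        (∀ i, AnalyticOn ℂ (h i) U) ∧
        ∀ z ∈ U, (1 + ∑ i, ‖h i z‖ ^ 2) ^ α = 1 + ∑' j, ‖f j z‖ ^ 2 := by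
  classical
  rintro ⟨n, hn, α, hα, hv, hva, hEq⟩
  have hf' : ∀ j, AnalyticOnNhd ℂ (f j) U := fun j => (hUo.analyticOn_iff_analyticOnNhd).1 (hf j)
  have hv' : ∀ i, AnalyticOnNhd ℂ (hv i) U := fun i => (hUo.analyticOn_iff_analyticOnNhd).1 (hva i)
  -- the finite holomorphic family coming from expanding the α-th power
  set g : (Fin α → Option (Fin n)) → (Fin d → ℂ) → ℂ :=
    fun φ z => ∏ t, (φ t).elim 1 (fun i => hv i z) with hgdef
  have hganal : ∀ φ, AnalyticOnNhd ℂ (g φ) U := by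
    intro φ
    apply Finset.analyticOnNhd_fun_prod
    intro t _
    cases hφt : φ t with
    | none => simpa [hφt] using (analyticOnNhd_const : AnalyticOnNhd ℂ (fun _ => (1:ℂ)) U)
    | some i => simpa [hφt] using hv' i
  have hgsum : ∀ z, (∑ φ, ‖g φ z‖ ^ 2) = (1 + ∑ i, ‖hv i z‖ ^ 2) ^ α := by
    intro z
    have e1 : ∀ φ : Fin α → Option (Fin n),
        ‖g φ z‖ ^ 2 = ∏ t, (φ t).elim 1 (fun i => ‖hv i z‖ ^ 2) := by
      intro φ
      rw [hgdef]
      dsimp only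
      rw [norm_prod, ← Finset.prod_pow]
      refine Finset.prod_congr rfl fun t _ => ?_
      cases hφt : φ t <;> simp [hφt]
    calc ∑ φ, ‖g φ z‖ ^ 2
        = ∑ φ ∈ Fintype.piFinset (fun _ : Fin α => (Finset.univ : Finset (Option (Fin n)))),
            ∏ t, (φ t).elim 1 (fun i => ‖hv i z‖ ^ 2) := by
          rw [Fintype.piFinset_univ]
          exact Finset.sum_congr rfl fun φ _ => e1 φ
      _ = ∏ t : Fin α, ∑ o : Option (Fin n), o.elim 1 (fun i => ‖hv i z‖ ^ 2) :=
          (Finset.prod_univ_sum (fun _ : Fin α => (Finset.univ : Finset (Option (Fin n)))) (fun _ o => o.elim 1 (fun i => ‖hv i z‖ ^ 2))).symm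
      _ = ∏ _t : Fin α, (1 + ∑ i, ‖hv i z‖ ^ 2) := by
          refine Finset.prod_congr rfl fun t _ => ?_
          rw [Fintype.sum_option]
          simp
      _ = (1 + ∑ i, ‖hv i z‖ ^ 2) ^ α := by
          rw [Finset.prod_const, Finset.card_univ, Fintype.card_fin]
  -- the augmented sequence (constant 1 prepended)
  set F : ℕ → (Fin d → ℂ) → ℂ := fun j => Nat.casesOn j (fun _ => 1) f with hFdef
  have hFanal : ∀ j, AnalyticOnNhd ℂ (F j) U := by
    intro j
    cases j with
    | zero => exact analyticOnNhd_const
    | succ j => exact hf' j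
  have hFsum : ∀ z ∈ U, HasSum (fun j => ‖F j z‖ ^ 2) (∑ φ, ‖g φ z‖ ^ 2) := by
    intro z hz
    have h1 : HasSum (fun j => ‖F (j + 1) z‖ ^ 2) (∑' j, ‖f j z‖ ^ 2) := (hsum z hz).hasSum
    have h2 := (hasSum_nat_add_iff (f := fun j => ‖F j z‖ ^ 2) 1).1 h1
    have h3 : (∑' j, ‖f j z‖ ^ 2) + ∑ i ∈ Finset.range 1, ‖F i z‖ ^ 2
        = ∑ φ, ‖g φ z‖ ^ 2 := by
      rw [hgsum z, hEq z hz]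
      simp [hFdef]
      ring
    rwa [h3] at h2
  have hQc : ContinuousOn (fun z => ∑ φ, ‖g φ z‖ ^ 2) U :=
    continuousOn_finset_sum _ fun φ _ => ((hganal φ).continuousOn.norm).pow 2
  -- geometry
  obtain ⟨z0, hz0U⟩ := hUc.nonempty
  obtain ⟨R, hR, hRU⟩ := Metric.isOpen_iff.1 hUo z0 hz0U
  set r' : ℝ := R / 3 with hr'def
  have hr' : 0 < r' := by rw [hr'def]; linarith
  have h2r'R : 2 * r' < R := by rw [hr'def]; linarith
  set C0 : Set (Fin d → ℂ) := Metric.closedBall z0 (2 * r') with hC0def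
  have hC0 : IsCompact C0 := isCompact_closedBall _ _
  have hC0U : C0 ⊆ U := (Metric.closedBall_subset_ball h2r'R).trans hRU
  have hB'U : Metric.ball z0 r' ⊆ U := (Metric.ball_subset_ball (by linarith)).trans hRU
  -- THE GRAM IDENTITY on the small ball
  have hGram : ∀ z ∈ Metric.ball z0 r', ∀ w ∈ Metric.ball z0 r',
      (∑' j, F j z * conj' (F j w)) = ∑ φ, g φ z * conj' (g φ w) := by
    have hvan : ∀ x : (Fin d ⊕ Fin d) → ℂ,
        (∀ s, x s ∈ Metric.ball ((ccoord z0 s : ℝ) : ℂ) r') →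
        ((∑ φ, g φ (Zmap x) * conj' (g φ (Wmap x))) -
          ∑' j, F j (Zmap x) * conj' (F j (Wmap x))) = 0 := by
      refine vanish_of_slices hr' ?_ ?_
      · -- slices
        intro x hx t
        have hmem1 : ∀ lam ∈ Metric.ball ((ccoord z0 t : ℝ) : ℂ) r',
            Zmap (Function.update x t lam) ∈ C0 := by
          intro lam hlam
          rw [hC0def, Metric.mem_closedBall, dist_pi_le_iff (by positivity)]
          intro s
          refine le_of_lt (Zmap_mem ?_ s)
          intro u
          rcases eq_or_ne u t with rfl | hu
          · rw [Function.update_self]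
            exact Metric.mem_ball.1 hlam
          · rw [Function.update_of_ne hu]
            exact Metric.mem_ball.1 (hx u)
        have hmem2 : ∀ mu ∈ Metric.ball ((ccoord z0 t : ℝ) : ℂ) r',
            Wmap (Function.update x t (conj' mu)) ∈ C0 := by
          intro mu hmu
          rw [hC0def, Metric.mem_closedBall, dist_pi_le_iff (by positivity)]
          intro s
          refine le_of_lt (Wmap_mem ?_ s)
          intro u
          rcases eq_or_ne u t with rfl | hu
          · rw [Function.update_self]
            exact Metric.mem_ball.1 (conj_mem_ball hmu)
          · rw [Function.update_of_ne hu]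
            exact Metric.mem_ball.1 (hx u)
        have hks := kernel_slice_diff hUo hFanal hganal hFsum hQc hC0 hC0U
          (Zmap_update_diff x t) (Wmap_update_diff x t) hmem1 hmem2
        simp only [Complex.conj_conj] at hks
        exact hks
      · -- real points
        intro x hx him
        have hW : Wmap x = Zmap (d := d) x := by
          funext s
          have h1 : conj' (x (Sum.inl s)) = x (Sum.inl s) :=
            Complex.conj_eq_iff_im.2 (him (Sum.inl s))
          have h2 : conj' (x (Sum.inr s)) = x (Sum.inr s) :=
            Complex.conj_eq_iff_im.2 (him (Sum.inr s))
          simp only [Wmap, Zmap, map_sub, map_mul, Complex.conj_I, h1, h2]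
          ring
        have hzzU : Zmap x ∈ U := by
          apply hRU
          rw [Metric.mem_ball, dist_pi_lt_iff hR]
          intro s
          exact lt_trans (Zmap_mem (fun u => Metric.mem_ball.1 (hx u)) s) h2r'R
        have hmc : ∀ w : ℂ, w * conj' w = ((‖w‖ ^ 2 : ℝ) : ℂ) := by
          intro w
          rw [Complex.mul_conj]
          norm_cast
          rw [← Complex.sq_norm]
        rw [hW]
        have e1 : (∑ φ, g φ (Zmap x) * conj' (g φ (Zmap x)))
            = ((∑ φ, ‖g φ (Zmap x)‖ ^ 2 : ℝ) : ℂ) := by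
          rw [show ((∑ φ, ‖g φ (Zmap x)‖ ^ 2 : ℝ) : ℂ)
              = ∑ φ, ((‖g φ (Zmap x)‖ ^ 2 : ℝ) : ℂ) by push_cast; rfl]
          exact Finset.sum_congr rfl fun φ _ => hmc _
        have e2 : (∑' j, F j (Zmap x) * conj' (F j (Zmap x)))
            = ((∑ φ, ‖g φ (Zmap x)‖ ^ 2 : ℝ) : ℂ) := by
          calc (∑' j, F j (Zmap x) * conj' (F j (Zmap x)))
              = ∑' j, ((‖F j (Zmap x)‖ ^ 2 : ℝ) : ℂ) := tsum_congr fun j => hmc _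
            _ = ((∑' j, ‖F j (Zmap x)‖ ^ 2 : ℝ) : ℂ) := (Complex.ofReal_tsum _).symm
            _ = _ := by rw [(hFsum _ hzzU).tsum_eq]
        rw [e1, e2, sub_self]
    intro z hz w hw
    set x : (Fin d ⊕ Fin d) → ℂ :=
      Sum.elim (fun s => (z s + conj' (w s)) / 2)
               (fun s => (z s - conj' (w s)) / (2 * Complex.I)) with hxdef
    have hzs : ∀ s, ‖z s - z0 s‖ < r' := fun s =>
      lt_of_le_of_lt (by rw [← dist_eq_norm]; exact dist_le_pi_dist z z0 s) (Metric.mem_ball.1 hz)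
    have hws : ∀ s, ‖w s - z0 s‖ < r' := fun s =>
      lt_of_le_of_lt (by rw [← dist_eq_norm]; exact dist_le_pi_dist w z0 s) (Metric.mem_ball.1 hw)
    have hxmem : ∀ u, x u ∈ Metric.ball ((ccoord z0 u : ℝ) : ℂ) r' := by
      intro u
      rw [Metric.mem_ball, dist_eq_norm]
      cases u with
      | inl s =>
        have hre : (((z0 s).re : ℝ) : ℂ) = (z0 s + conj' (z0 s)) / 2 := by
          rw [Complex.add_conj]; push_cast; ring
        have key : x (Sum.inl s) - ((ccoord z0 (Sum.inl s) : ℝ) : ℂ)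
            = ((z s - z0 s) + conj' (w s - z0 s)) / 2 := by
          simp only [hxdef, Sum.elim_inl, ccoord]
          rw [hre, map_sub]
          ring
        rw [key]
        have hnd : ‖((z s - z0 s) + conj' (w s - z0 s)) / 2‖
            = ‖(z s - z0 s) + conj' (w s - z0 s)‖ / 2 := by
          rw [norm_div]; norm_num
        rw [hnd]
        have htri : ‖(z s - z0 s) + conj' (w s - z0 s)‖ ≤ ‖z s - z0 s‖ + ‖w s - z0 s‖ := by
          refine le_trans (norm_add_le _ _) ?_
          rw [RCLike.norm_conj]
        linarith [hzs s, hws s]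
      | inr s =>
        have him : (((z0 s).im : ℝ) : ℂ) = (z0 s - conj' (z0 s)) / (2 * Complex.I) := by
          rw [Complex.sub_conj]
          push_cast
          field_simp
        have key : x (Sum.inr s) - ((ccoord z0 (Sum.inr s) : ℝ) : ℂ)
            = ((z s - z0 s) - conj' (w s - z0 s)) / (2 * Complex.I) := by
          simp only [hxdef, Sum.elim_inr, ccoord]
          rw [him, map_sub]
          ring
        rw [key]
        have hnd : ‖((z s - z0 s) - conj' (w s - z0 s)) / (2 * Complex.I)‖
            = ‖(z s - z0 s) - conj' (w s - z0 s)‖ / 2 := by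
          rw [norm_div, norm_mul, Complex.norm_I]
          norm_num
        rw [hnd]
        have htri : ‖(z s - z0 s) - conj' (w s - z0 s)‖ ≤ ‖z s - z0 s‖ + ‖w s - z0 s‖ := by
          refine le_trans (norm_sub_le _ _) ?_
          rw [RCLike.norm_conj]
        linarith [hzs s, hws s]
    have hZx : Zmap x = z := by
      funext s
      simp only [Zmap, hxdef, Sum.elim_inl, Sum.elim_inr]
      field_simp
      ring
    have hWx : Wmap x = w := by
      funext s
      have hinner : x (Sum.inl s) - Complex.I * x (Sum.inr s) = conj' (w s) := by
        simp only [hxdef, Sum.elim_inl, Sum.elim_inr]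
        field_simp
        ring
      simp only [Wmap, hinner, Complex.conj_conj]
    have hres := hvan x hxmem
    rw [hZx, hWx] at hres
    exact (sub_eq_zero.1 hres).symm
  -- each f j is a combination of the g φ on the small ball
  have hcomb : ∀ j0 : ℕ, ∃ cvec : (Fin α → Option (Fin n)) → ℂ,
      ∀ w ∈ Metric.ball z0 r', f j0 w = ∑ φ, cvec φ * g φ w := by
    -- lp-space vectors
    have hmemlp : ∀ y, y ∈ U → Memℓp (fun j => conj' (F j y)) 2 := by
      intro y hy
      refine memℓp_gen ?_
      refine Summable.congr (hFsum y hy).summable ?_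
      intro j
      rw [RCLike.norm_conj]
      rw [show ((2 : ENNReal).toReal) = ((2 : ℕ) : ℝ) by simp, Real.rpow_natCast]
    set Φm : (Fin d → ℂ) → lp (fun _ : ℕ => ℂ) 2 := fun y =>
      if hy : y ∈ U then ⟨fun j => conj' (F j y), hmemlp y hy⟩ else 0 with hΦdef
    have hΦcoe : ∀ y, y ∈ U → ∀ j, (Φm y : ℕ → ℂ) j = conj' (F j y) := by
      intro y hy j
      simp only [hΦdef, dif_pos hy]
    have hΦinner : ∀ y, y ∈ U → ∀ y', y' ∈ U →
        ⟪Φm y, Φm y'⟫_ℂ = ∑' j, F j y * conj' (F j y') := by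
      intro y hy y' hy'
      rw [lp.inner_eq_tsum]
      refine tsum_congr fun j => ?_
      rw [hΦcoe y hy j, hΦcoe y' hy' j, RCLike.inner_apply', Complex.conj_conj]
    -- Euclidean vectors
    set γm : (Fin d → ℂ) → EuclideanSpace ℂ (Fin α → Option (Fin n)) :=
      fun y => WithLp.toLp 2 (fun φ => conj' (g φ y)) with hγdef
    have hγinner : ∀ y y', ⟪γm y, γm y'⟫_ℂ = ∑ φ, g φ y * conj' (g φ y') := by
      intro y y'
      rw [PiLp.inner_apply]
      refine Finset.sum_congr rfl fun φ _ => ?_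
      rw [RCLike.inner_apply']
      simp only [hγdef, PiLp.toLp_apply, Complex.conj_conj]
    have hgram2 : ∀ y ∈ Metric.ball z0 r', ∀ y' ∈ Metric.ball z0 r',
        ⟪Φm y, Φm y'⟫_ℂ = ⟪γm y, γm y'⟫_ℂ := by
      intro y hy y' hy'
      rw [hΦinner y (hB'U hy) y' (hB'U hy'), hγinner, hGram y hy y' hy']
    -- independent spanning subfamily
    obtain ⟨bset, hbsub, hbspan, hbind⟩ :=
      exists_linearIndependent ℂ (γm '' Metric.ball z0 r')
    haveI hbfinite : Finite ↥bset := hbind.finite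
    haveI : Fintype ↥bset := Fintype.ofFinite _
    have hptsex : ∀ v : ↥bset, ∃ y, y ∈ Metric.ball z0 r' ∧ γm y = v := by
      intro v
      rcases hbsub v.2 with ⟨y, hy, hyv⟩
      exact ⟨y, hy, hyv⟩
    choose pts hptsB hptsγ using hptsex
    -- consistency of F-values with linear relations among γ-vectors
    have hconsist : ∀ y, y ∈ Metric.ball z0 r' → ∀ a : ↥bset → ℂ,
        (∑ i, a i • ((i : ↥bset) : EuclideanSpace ℂ (Fin α → Option (Fin n)))) = γm y →
        ∀ j, conj' (F j y) = ∑ i, a i * conj' (F j (pts i)) := by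
      intro y hy a ha j
      have hnorm : ‖Φm y - ∑ i, a i • Φm (pts i)‖ = ‖γm y - ∑ i, a i • γm (pts i)‖ := by
        have hg := norm_eq_of_gram (ι := Option ↥bset)
          (fun o => Option.elim o (Φm y) (fun i => Φm (pts i)))
          (fun o => Option.elim o (γm y) (fun i => γm (pts i)))
          (fun o o' => by
            cases o with
            | none =>
              cases o' with
              | none => exact hgram2 y hy y hy
              | some i' => exact hgram2 y hy (pts i') (hptsB i')
            | some i =>
              cases o' with
              | none => exact hgram2 (pts i) (hptsB i) y hy
              | some i' => exact hgram2 (pts i) (hptsB i) (pts i') (hptsB i'))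
          (fun o => Option.elim o 1 (fun i => -(a i)))
        simpa [Fintype.sum_option, sub_eq_add_neg, Finset.sum_neg_distrib, neg_smul,
          one_smul] using hg
      have hγ0 : γm y - ∑ i, a i • γm (pts i) = 0 := by
        rw [sub_eq_zero, ← ha]
        refine Finset.sum_congr rfl fun i _ => ?_
        rw [hptsγ i]
      rw [hγ0, norm_zero, norm_eq_zero, sub_eq_zero] at hnorm
      have hco := congrArg (fun (v : lp (fun _ : ℕ => ℂ) 2) => (v : ℕ → ℂ) j) hnorm
      simp only at hco
      rw [hΦcoe y (hB'U hy) j] at hco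
      rw [hco, lp.coeFn_sum]
      rw [Finset.sum_apply]
      refine Finset.sum_congr rfl fun i _ => ?_
      rw [lp.coeFn_smul, Pi.smul_apply, hΦcoe (pts i) (hB'U (hptsB i)) j, smul_eq_mul]
    intro j0
    -- the evaluation linear map and its surjectivity
    set A : EuclideanSpace ℂ (Fin α → Option (Fin n)) →ₗ[ℂ] (↥bset → ℂ) :=
      LinearMap.pi (fun i =>
        ((innerSL ℂ ((i : ↥bset) : EuclideanSpace ℂ (Fin α → Option (Fin n))))).toLinearMap)
      with hAdef
    have hAapp : ∀ c i, A c i = ⟪((i : ↥bset) : EuclideanSpace ℂ (Fin α → Option (Fin n))), c⟫_ℂ :=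
      fun c i => rfl
    have hAker : LinearMap.ker A = (Submodule.span ℂ (Set.range
        (fun i : ↥bset => (i : EuclideanSpace ℂ (Fin α → Option (Fin n))))))ᗮ := by
      ext c
      simp only [LinearMap.mem_ker, Submodule.mem_orthogonal]
      constructor
      · intro hc u hu
        induction hu using Submodule.span_induction with
        | mem v hv =>
          obtain ⟨i, rfl⟩ := hv
          have := congrFun hc i
          simpa [hAapp] using this
        | zero => simp
        | add u v _ _ hu hv => rw [inner_add_left, hu, hv, add_zero]
        | smul r u _ hu => rw [inner_smul_left, hu, mul_zero]
      · intro hc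
        funext i
        have := hc _ (Submodule.subset_span ⟨i, rfl⟩)
        simpa [hAapp] using this
    have hsurj : LinearMap.range A = ⊤ := by
      have e1 := LinearMap.finrank_range_add_finrank_ker A
      have e2 := Submodule.finrank_add_finrank_orthogonal (K := Submodule.span ℂ (Set.range
        (fun i : ↥bset => (i : EuclideanSpace ℂ (Fin α → Option (Fin n))))))
      have e3 : Module.finrank ℂ (Submodule.span ℂ (Set.range
          (fun i : ↥bset => (i : EuclideanSpace ℂ (Fin α → Option (Fin n))))))
          = Fintype.card ↥bset := finrank_span_eq_card hbind
      have e4 : Module.finrank ℂ (↥bset → ℂ) = Fintype.card ↥bset := by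
        rw [Module.finrank_pi]
      refine Submodule.eq_top_of_finrank_eq ?_
      rw [hAker] at e1
      omega
    obtain ⟨csol, hcsol⟩ := (LinearMap.range_eq_top.1 hsurj) (fun i => F (j0 + 1) (pts i))
    refine ⟨fun φ => csol φ, ?_⟩
    intro w hw
    have hwspan : γm w ∈ Submodule.span ℂ (Set.range
        (fun i : ↥bset => (i : EuclideanSpace ℂ (Fin α → Option (Fin n))))) := by
      rw [Subtype.range_coe, hbspan]
      exact Submodule.subset_span ⟨w, hw, rfl⟩
    obtain ⟨a, ha⟩ := (Submodule.mem_span_range_iff_exists_fun ℂ).1 hwspan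
    have hcons := hconsist w hw a ha (j0 + 1)
    have h1 : ⟪γm w, csol⟫_ℂ = F (j0 + 1) w := by
      rw [← ha, sum_inner]
      have hterm : ∀ i : ↥bset,
          ⟪a i • ((i : ↥bset) : EuclideanSpace ℂ (Fin α → Option (Fin n))), csol⟫_ℂ
          = conj' (a i) * F (j0 + 1) (pts i) := by
        intro i
        rw [inner_smul_left]
        congr 1
        have := congrFun hcsol i
        rw [← this, hAapp]
      rw [Finset.sum_congr rfl (fun i _ => hterm i)]
      have : (∑ i, conj' (a i) * F (j0 + 1) (pts i))
          = conj' (∑ i, a i * conj' (F (j0 + 1) (pts i))) := by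
        rw [map_sum]
        refine Finset.sum_congr rfl fun i _ => ?_
        rw [map_mul, Complex.conj_conj]
      rw [this, ← hcons, Complex.conj_conj]
    have h2 : ⟪γm w, csol⟫_ℂ = ∑ φ, csol φ * g φ w := by
      rw [PiLp.inner_apply]
      refine Finset.sum_congr rfl fun φ _ => ?_
      rw [RCLike.inner_apply']
      simp only [hγdef, PiLp.toLp_apply, Complex.conj_conj]
      ring
    have : f j0 w = F (j0 + 1) w := rfl
    rw [this, ← h1, h2]
  -- identity theorem and conclusion
  have hcombU : ∀ j0 : ℕ, ∃ cvec : (Fin α → Option (Fin n)) → ℂ,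
      ∀ w ∈ U, f j0 w = ∑ φ, cvec φ * g φ w := by
    intro j0
    obtain ⟨cvec, hcvec⟩ := hcomb j0
    refine ⟨cvec, ?_⟩
    have hana : AnalyticOnNhd ℂ (fun y => f j0 y - ∑ φ, cvec φ * g φ y) U := by
      refine AnalyticOnNhd.sub (hf' j0) ?_
      exact Finset.analyticOnNhd_fun_sum _ fun φ _ => analyticOnNhd_const.mul (hganal φ)
    have hev : (fun y => f j0 y - ∑ φ, cvec φ * g φ y) =ᶠ[nhds z0] 0 := by
      filter_upwards [Metric.ball_mem_nhds z0 hr'] with y hy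
      simp [hcvec y hy]
    have := hana.eqOn_zero_of_preconnected_of_eventuallyEq_zero hUc.isPreconnected hz0U hev
    intro w hw
    have h0 := this hw
    simp only [Pi.zero_apply] at h0
    exact sub_eq_zero.1 h0
  apply hinf
  have hspan : (Submodule.span ℂ (Set.range fun j => U.restrict (f j))) ≤
      Submodule.span ℂ (Set.range fun φ : Fin α → Option (Fin n) => U.restrict (g φ)) := by
    rw [Submodule.span_le]
    rintro _ ⟨j, rfl⟩
    show U.restrict (f j) ∈ _
    obtain ⟨cvec, hcvec⟩ := hcombU j
    have : U.restrict (f j) = ∑ φ, cvec φ • U.restrict (g φ) := by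
      funext y
      simp only [Set.restrict_apply, Finset.sum_apply, Pi.smul_apply, smul_eq_mul]
      exact hcvec y y.2
    rw [this]
    exact Submodule.sum_mem _ fun φ _ =>
      Submodule.smul_mem _ _ (Submodule.subset_span ⟨φ, rfl⟩)
  haveI : FiniteDimensional ℂ
      ↥(Submodule.span ℂ (Set.range fun φ : Fin α → Option (Fin n) => U.restrict (g φ))) :=
    FiniteDimensional.span_of_finite ℂ (Set.finite_range _)
  exact Submodule.finiteDimensional_of_le hspan

end Main
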